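/- Assume principal binet lift data (bV, bF, uV, uF, hV, hF, ρV, ρF, σV, σF) satisfying relations (i)–(iv), and let P and Λ be the associated Lie lift vectors in ℝ⁶. Fix a cross: an edge (v, v') of ℤ² with its two flanking faces (f, f') (so v, v' are both corners of f and of f'). Then finrank of the submodule spanned by {P(v), Λ(v), P(v'), Λ(v')} plus finrank of the submodule spanned by {P(f), Λ(f), P(f'), Λ(f')} is at most 6. Consequently, if the span of {P(f), Λ(f), P(f'), Λ(f')} has finrank at least 3 and the pairs (P(v), Λ(v)) and (P(v'), Λ(v')) are each linearly independent, then the two planes span{P(v), Λ(v)} and span{P(v'), Λ(v')} have nontrivial intersection — adjacent lines of the Lie lift of a principal binet intersect, i.e. the Lie lift is a line bicongruence. -/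

import Mathlib

open Matrix

/-- A vertex `v` is incident to the face labeled `f` if `v` is one of its four corners. -/
def Incident (v f : ℤ × ℤ) : Prop :=
  v = f ∨ v = f + (1, 0) ∨ v = f + (0, 1) ∨ v = f + (1, 1)

/-- The Möbius part of the Lie lift: `P(d) = (b(d)₀, b(d)₁, b(d)₂, ρ(d) - 1/2, ρ(d) + 1/2, 0)`. -/
noncomputable def Plift (b : ℤ × ℤ → Fin 3 → ℝ) (ρ : ℤ × ℤ → ℝ) (d : ℤ × ℤ) : Fin 6 → ℝ :=
  ![b d 0, b d 1, b d 2, ρ d - 1 / 2, ρ d + 1 / 2, 0]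

/-- The Laguerre part of the Lie lift: `Λ(d) = (u(d)₀, u(d)₁, u(d)₂, -h(d), -h(d), σ(d))`. -/
noncomputable def Llift (u : ℤ × ℤ → Fin 3 → ℝ) (h σ : ℤ × ℤ → ℝ) (d : ℤ × ℤ) : Fin 6 → ℝ :=
  ![u d 0, u d 1, u d 2, -h d, -h d, σ d]

noncomputable def Bform : LinearMap.BilinForm ℝ (Fin 6 → ℝ) :=
  LinearMap.mk₂ ℝ (fun x y => x 0*y 0 + x 1*y 1 + x 2*y 2 + x 3*y 3 - x 4*y 4 - x 5*y 5)
   (by intros; simp; ring) (by intros; simp; ring) (by intros; simp; ring) (by intros; simp; ring)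

lemma Bform_apply (x y : Fin 6 → ℝ) :
    Bform x y = x 0*y 0 + x 1*y 1 + x 2*y 2 + x 3*y 3 - x 4*y 4 - x 5*y 5 := rfl

@[simp] lemma cons_val_five {α : Type*} (a b c d e f : α) : ![a,b,c,d,e,f] 5 = f := rfl

lemma Bform_refl : Bform.IsRefl := fun x y h => by rw [Bform_apply] at *; linarith [h]

lemma Bform_nondeg : Bform.Nondegenerate := by
  refine (LinearMap.IsRefl.nondegenerate_iff_separatingLeft Bform_refl).mpr ?_
  intro x h
  funext i
  fin_cases i <;>
  · first
    | (have := h (Pi.single 0 1); simp [Bform_apply, Pi.single_apply] at this; simpa using this)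
    | (have := h (Pi.single 1 1); simp [Bform_apply, Pi.single_apply] at this; simpa using this)
    | (have := h (Pi.single 2 1); simp [Bform_apply, Pi.single_apply] at this; simpa using this)
    | (have := h (Pi.single 3 1); simp [Bform_apply, Pi.single_apply] at this; simpa using this)
    | (have := h (Pi.single 4 1); simp [Bform_apply, Pi.single_apply] at this; simpa using this)
    | (have := h (Pi.single 5 1); simp [Bform_apply, Pi.single_apply] at this; simpa using this)

/-- At each cross of a principal binet, the spans of the Lie lift data on the edge and on the
dual edge have total rank at most `6`; consequently, under the stated nondegeneracy
assumptions, the two Lie lift lines at adjacent vertices intersect: the Lie lift is a line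
bicongruence. -/
theorem stmt_14 (bV bF uV uF : ℤ × ℤ → Fin 3 → ℝ) (hV hF ρV ρF σV σF : ℤ × ℤ → ℝ)
    (h1 : ∀ v f : ℤ × ℤ, Incident v f → bV v ⬝ᵥ bF f = ρV v + ρF f)
    (h2 : ∀ v f : ℤ × ℤ, Incident v f → uV v ⬝ᵥ uF f = σV v * σF f)
    (h3 : ∀ v f : ℤ × ℤ, Incident v f → uF f ⬝ᵥ bV v + hF f = 0)
    (h4 : ∀ v f : ℤ × ℤ, Incident v f → uV v ⬝ᵥ bF f + hV v = 0)
    (v v' f f' : ℤ × ℤ)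
    (hcross : (v' = v + (1, 0) ∧ f = v - (0, 1) ∧ f' = v) ∨
              (v' = v + (0, 1) ∧ f = v - (1, 0) ∧ f' = v)) :
    Module.finrank ℝ (Submodule.span ℝ
        ({Plift bV ρV v, Llift uV hV σV v, Plift bV ρV v', Llift uV hV σV v'} :
          Set (Fin 6 → ℝ))) +
      Module.finrank ℝ (Submodule.span ℝ
        ({Plift bF ρF f, Llift uF hF σF f, Plift bF ρF f', Llift uF hF σF f'} :
          Set (Fin 6 → ℝ))) ≤ 6 ∧
    (3 ≤ Module.finrank ℝ (Submodule.span ℝ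
        ({Plift bF ρF f, Llift uF hF σF f, Plift bF ρF f', Llift uF hF σF f'} :
          Set (Fin 6 → ℝ))) →
      LinearIndependent ℝ ![Plift bV ρV v, Llift uV hV σV v] →
      LinearIndependent ℝ ![Plift bV ρV v', Llift uV hV σV v'] →
      Submodule.span ℝ ({Plift bV ρV v, Llift uV hV σV v} : Set (Fin 6 → ℝ)) ⊓
        Submodule.span ℝ ({Plift bV ρV v', Llift uV hV σV v'} : Set (Fin 6 → ℝ)) ≠ ⊥) := by
  -- incidence facts
  have hinc4 : Incident v f ∧ Incident v f' ∧ Incident v' f ∧ Incident v' f' := by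
    rcases hcross with ⟨rfl, rfl, rfl⟩ | ⟨rfl, rfl, rfl⟩
    · exact ⟨Or.inr (Or.inr (Or.inl (by ring))), Or.inl rfl,
        Or.inr (Or.inr (Or.inr (by rw [Prod.ext_iff]; constructor <;> simp))), Or.inr (Or.inl (by ring))⟩
    · exact ⟨Or.inr (Or.inl (by ring)), Or.inl rfl,
        Or.inr (Or.inr (Or.inr (by rw [Prod.ext_iff]; constructor <;> simp))), Or.inr (Or.inr (Or.inl (by ring)))⟩
  -- pairing identities
  have key : ∀ d g : ℤ × ℤ, Incident d g →
      Bform (Plift bV ρV d) (Plift bF ρF g) = 0 ∧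
      Bform (Plift bV ρV d) (Llift uF hF σF g) = 0 ∧
      Bform (Llift uV hV σV d) (Plift bF ρF g) = 0 ∧
      Bform (Llift uV hV σV d) (Llift uF hF σF g) = 0 := by
    intro d g hdg
    have e1 := h1 d g hdg
    have e2 := h2 d g hdg
    have e3 := h3 d g hdg
    have e4 := h4 d g hdg
    simp only [dotProduct, Fin.sum_univ_three] at e1 e2 e3 e4
    refine ⟨?_, ?_, ?_, ?_⟩ <;>
      simp [Bform_apply, Plift, Llift] <;> nlinarith [e1, e2, e3, e4]
  set W := Submodule.span ℝ
      ({Plift bV ρV v, Llift uV hV σV v, Plift bV ρV v', Llift uV hV σV v'} : Set (Fin 6 → ℝ))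
  set U := Submodule.span ℝ
      ({Plift bF ρF f, Llift uF hF σF f, Plift bF ρF f', Llift uF hF σF f'} : Set (Fin 6 → ℝ))
  have hUW : U ≤ Bform.orthogonal W := by
    rw [Submodule.span_le]
    intro x hx
    simp only [SetLike.mem_coe]
    rw [LinearMap.BilinForm.mem_orthogonal_iff]
    intro n hn
    have hgen : ∀ m ∈ ({Plift bV ρV v, Llift uV hV σV v, Plift bV ρV v', Llift uV hV σV v'} :
        Set (Fin 6 → ℝ)), Bform m x = 0 := by
      intro m hm
      rcases hm with rfl | rfl | rfl | rfl <;> rcases hx with rfl | rfl | rfl | rfl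
      · exact (key v f hinc4.1).1
      · exact (key v f hinc4.1).2.1
      · exact (key v f' hinc4.2.1).1
      · exact (key v f' hinc4.2.1).2.1
      · exact (key v f hinc4.1).2.2.1
      · exact (key v f hinc4.1).2.2.2
      · exact (key v f' hinc4.2.1).2.2.1
      · exact (key v f' hinc4.2.1).2.2.2
      · exact (key v' f hinc4.2.2.1).1
      · exact (key v' f hinc4.2.2.1).2.1
      · exact (key v' f' hinc4.2.2.2).1
      · exact (key v' f' hinc4.2.2.2).2.1
      · exact (key v' f hinc4.2.2.1).2.2.1
      · exact (key v' f hinc4.2.2.1).2.2.2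
      · exact (key v' f' hinc4.2.2.2).2.2.1
      · exact (key v' f' hinc4.2.2.2).2.2.2
    have hker : W ≤ LinearMap.ker (Bform.flip x) := by
      rw [Submodule.span_le]
      intro m hm
      simp only [SetLike.mem_coe, LinearMap.mem_ker, LinearMap.flip_apply]
      exact hgen m hm
    simpa using hker hn
  have hUle : Module.finrank ℝ U ≤ Module.finrank ℝ (Bform.orthogonal W) :=
    Submodule.finrank_mono hUW
  have horth : Module.finrank ℝ (Bform.orthogonal W) = 6 - Module.finrank ℝ W := by
    rw [LinearMap.BilinForm.finrank_orthogonal Bform_nondeg]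
    simp
  have hWle : Module.finrank ℝ W ≤ 6 := by
    simpa using Submodule.finrank_le W
  have hsum : Module.finrank ℝ W + Module.finrank ℝ U ≤ 6 := by omega
  refine ⟨hsum, ?_⟩
  intro hU3 hli hli' hbot
  set W1 := Submodule.span ℝ ({Plift bV ρV v, Llift uV hV σV v} : Set (Fin 6 → ℝ))
  set W2 := Submodule.span ℝ ({Plift bV ρV v', Llift uV hV σV v'} : Set (Fin 6 → ℝ))
  have hr1 : Module.finrank ℝ W1 = 2 := by
    have : W1 = Submodule.span ℝ (Set.range ![Plift bV ρV v, Llift uV hV σV v]) := by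
      rw [show Set.range ![Plift bV ρV v, Llift uV hV σV v] = {Plift bV ρV v, Llift uV hV σV v}
        by simp [Matrix.range_cons, Matrix.range_empty]; exact Set.pair_comm _ _]
    rw [this, finrank_span_eq_card hli]
    simp
  have hr2 : Module.finrank ℝ W2 = 2 := by
    have : W2 = Submodule.span ℝ (Set.range ![Plift bV ρV v', Llift uV hV σV v']) := by
      rw [show Set.range ![Plift bV ρV v', Llift uV hV σV v'] = {Plift bV ρV v', Llift uV hV σV v'}
        by simp [Matrix.range_cons, Matrix.range_empty]; exact Set.pair_comm _ _]
    rw [this, finrank_span_eq_card hli']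
    simp
  have hWsup : W = W1 ⊔ W2 := by
    simp only [W, W1, W2, ← Submodule.span_union]
    congr 1
    ext x
    simp only [Set.mem_insert_iff, Set.mem_singleton_iff, Set.mem_union]
    tauto
  have := Submodule.finrank_sup_add_finrank_inf_eq W1 W2
  rw [hbot] at this
  simp [finrank_bot] at this
  have hW4 : Module.finrank ℝ W = 4 := by rw [hWsup]; omega
  omega
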